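/- Under the stated tank setup, if the matrix Ṁ_d(t) is negative semidefinite for all t ∈ [0, t*], then ∫₀^{t*} ẋ(τ)ᵀ F_ext(τ) dτ ≥ −H(0) − T(0); that is, the tank-augmented system is passive over [0, t*] when the inertia is nonincreasing. -/

import Mathlib

open Matrix

lemma hasDerivAt_dot_mulVec {n : ℕ} (u v : ℝ → Fin n → ℝ) (u' v' : Fin n → ℝ)
    (A : ℝ → Matrix (Fin n) (Fin n) ℝ) (A' : Matrix (Fin n) (Fin n) ℝ) (t : ℝ)
    (hu : ∀ i, HasDerivAt (fun s => u s i) (u' i) t)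
    (hv : ∀ i, HasDerivAt (fun s => v s i) (v' i) t)
    (hA : ∀ i j, HasDerivAt (fun s => A s i j) (A' i j) t) :
    HasDerivAt (fun s => u s ⬝ᵥ (A s *ᵥ v s))
      (u' ⬝ᵥ (A t *ᵥ v t) + u t ⬝ᵥ (A' *ᵥ v t) + u t ⬝ᵥ (A t *ᵥ v')) t := by
  have key : ∀ i ∈ Finset.univ, HasDerivAt (fun s => ∑ j, u s i * (A s i j * v s j))
      (∑ j, (u' i * (A t i j * v t j) + u t i * (A' i j * v t j) + u t i * (A t i j * v' j))) t := by
    intro i _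
    apply HasDerivAt.fun_sum
    intro j _
    have := (hu i).mul ((hA i j).mul (hv j))
    exact this.congr_deriv (by simp only [Pi.mul_apply]; ring)
  have h := HasDerivAt.fun_sum key
  have e1 : (fun s => ∑ i, ∑ j, u s i * (A s i j * v s j)) = fun s => u s ⬝ᵥ (A s *ᵥ v s) := by
    funext s
    simp [dotProduct, mulVec, Finset.mul_sum]
  rw [e1] at h
  exact h.congr_deriv (by simp [dotProduct, mulVec, Finset.mul_sum, Finset.sum_add_distrib])

lemma continuous_dot_mulVec {n : ℕ} (u v : ℝ → Fin n → ℝ)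
    (A : ℝ → Matrix (Fin n) (Fin n) ℝ)
    (hu : ∀ i, Continuous (fun s => u s i)) (hv : ∀ i, Continuous (fun s => v s i))
    (hA : ∀ i j, Continuous (fun s => A s i j)) :
    Continuous (fun s => u s ⬝ᵥ (A s *ᵥ v s)) := by
  have e1 : (fun s => u s ⬝ᵥ (A s *ᵥ v s)) = fun s => ∑ i, ∑ j, u s i * (A s i j * v s j) := by
    funext s; simp [dotProduct, mulVec, Finset.mul_sum]
  rw [e1]
  exact continuous_finset_sum _ fun i _ => continuous_finset_sum _ fun j _ =>
    (hu i).mul ((hA i j).mul (hv j))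

/-- Under the tank setup, if `Ṁ_d(t)` is negative semidefinite for all
`t ∈ [0, t*]`, then `∫₀^{t*} ẋᵀ F_ext dτ ≥ −H(0) − T(0)`: the tank-augmented system is
passive over `[0, t*]` when the inertia is nonincreasing. -/
theorem tank_passive_nonincreasing_inertia {n : ℕ} (hn : 0 < n)
    (x : ℝ → Fin n → ℝ) (hx : ContDiff ℝ 2 x)
    (Md Dd Md' Dd' : ℝ → Matrix (Fin n) (Fin n) ℝ)
    (hMd' : ∀ i j t, HasDerivAt (fun s => Md s i j) (Md' t i j) t)
    (hMd'cont : ∀ i j, Continuous fun t => Md' t i j)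
    (hDd' : ∀ i j t, HasDerivAt (fun s => Dd s i j) (Dd' t i j) t)
    (hDd'cont : ∀ i j, Continuous fun t => Dd' t i j)
    (hMdpd : ∀ t, (Md t).PosDef) (hDdpd : ∀ t, (Dd t).PosDef)
    (Fext : ℝ → Fin n → ℝ)
    (hFext : ∀ t, Fext t = Md t *ᵥ deriv (deriv x) t + Dd t *ᵥ deriv x t)
    (PD PM : ℝ → ℝ)
    (hPD : ∀ t, PD t = deriv x t ⬝ᵥ (Dd t *ᵥ deriv x t))
    (hPM : ∀ t, PM t = (1 / 2) * (deriv x t ⬝ᵥ (Md' t *ᵥ deriv x t)))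
    (φ γ : ℝ → ℝ)
    (hφ : ∀ t, φ t = 0 ∨ φ t = 1) (hγ : ∀ t, γ t = 0 ∨ γ t = 1)
    (hφPDint : ∀ t, IntervalIntegrable (fun τ => (1 - φ τ) * PD τ) MeasureTheory.volume 0 t)
    (hγPMint : ∀ t, IntervalIntegrable (fun τ => (1 - γ τ) * PM τ) MeasureTheory.volume 0 t)
    (z : ℝ → ℝ) (hz : ∀ t, z t ≠ 0)
    (hzdyn : ∀ t, HasDerivAt z (φ t / z t * PD t - γ t / z t * PM t) t)
    (T H : ℝ → ℝ)
    (hT : ∀ t, T t = (1 / 2) * z t ^ 2)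
    (hH : ∀ t, H t = (1 / 2) * (deriv x t ⬝ᵥ (Md t *ᵥ deriv x t)))
    (tstar : ℝ) (htstar : 0 ≤ tstar)
    (hneg : ∀ t ∈ Set.Icc (0 : ℝ) tstar, (-(Md' t)).PosSemidef) :
    (∫ τ in (0 : ℝ)..tstar, deriv x τ ⬝ᵥ Fext τ) ≥ -H 0 - T 0 := by
  set x1 := deriv x with hx1def
  set x2 := deriv (deriv x) with hx2def
  -- regularity of x1, x2
  have hx' : ContDiff ℝ (1 + 1) x := by rw [one_add_one_eq_two]; exact hx
  have hx1cd : ContDiff ℝ 1 x1 := (contDiff_succ_iff_deriv.mp hx').2.2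
  have hx1d : ∀ t, HasDerivAt x1 (x2 t) t := fun t =>
    ((hx1cd.differentiable one_ne_zero) t).hasDerivAt
  have hx1di : ∀ i t, HasDerivAt (fun s => x1 s i) (x2 t i) t := fun i t =>
    (hasDerivAt_pi.mp (hx1d t)) i
  have hx1ci : ∀ i, Continuous fun s => x1 s i := fun i =>
    (continuous_apply i).comp (hx1cd.continuous)
  have hx2c : Continuous x2 := hx1cd.continuous_deriv le_rfl
  have hx2ci : ∀ i, Continuous fun s => x2 s i := fun i =>
    (continuous_apply i).comp hx2c
  have hMdc : ∀ i j, Continuous fun t => Md t i j := fun i j =>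
    continuous_iff_continuousAt.mpr fun t => (hMd' i j t).continuousAt
  have hDdc : ∀ i j, Continuous fun t => Dd t i j := fun i j =>
    continuous_iff_continuousAt.mpr fun t => (hDd' i j t).continuousAt
  -- symmetry of Md
  have hMdsym : ∀ t i j, Md t i j = Md t j i := fun t i j =>
    (by simpa using (hMdpd t).1.apply i j : Md t j i = Md t i j).symm
  have hswap : ∀ t, x2 t ⬝ᵥ (Md t *ᵥ x1 t) = x1 t ⬝ᵥ (Md t *ᵥ x2 t) := by
    intro t
    simp only [dotProduct, mulVec, Finset.mul_sum]
    rw [Finset.sum_comm]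
    apply Finset.sum_congr rfl
    intro i _
    apply Finset.sum_congr rfl
    intro j _
    rw [hMdsym t j i]
    ring
  -- derivative of H
  have hHd : ∀ t, HasDerivAt H (x1 t ⬝ᵥ (Md t *ᵥ x2 t) + PM t) t := by
    intro t
    have hb := hasDerivAt_dot_mulVec x1 x1 (x2 t) (x2 t) Md (Md' t) t
      (fun i => hx1di i t) (fun i => hx1di i t) (fun i j => hMd' i j t)
    have h := hb.const_mul (1 / 2 : ℝ)
    have e : (fun s => (1 / 2 : ℝ) * (x1 s ⬝ᵥ (Md s *ᵥ x1 s))) = H := by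
      funext s; rw [hH s]
    rw [e] at h
    refine h.congr_deriv ?_
    rw [hPM t, hswap t]
    ring
  -- derivative of T
  have hTd : ∀ t, HasDerivAt T (φ t * PD t - γ t * PM t) t := by
    intro t
    have h := ((hzdyn t).mul (hzdyn t)).const_mul (1 / 2 : ℝ)
    have e : (fun s => (1 / 2 : ℝ) * (z s * z s)) = T := by
      funext s; rw [hT s]; ring
    rw [← e]
    refine h.congr_deriv ?_
    rw [show φ t / z t * PD t - γ t / z t * PM t = (φ t * PD t - γ t * PM t) / z t by ring]
    rw [div_mul_cancel₀ _ (hz t), mul_comm (z t), div_mul_cancel₀ _ (hz t)]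
    ring
  -- combined storage function
  set G := fun t => H t + T t with hGdef
  set g : ℝ → ℝ := fun t => (x1 t ⬝ᵥ (Md t *ᵥ x2 t) + PM t) + (φ t * PD t - γ t * PM t)
    with hgdef
  have hGd : ∀ t, HasDerivAt G (g t) t := fun t => (hHd t).add (hTd t)
  -- the integrand
  set f : ℝ → ℝ := fun τ => x1 τ ⬝ᵥ Fext τ with hfdef
  have hkey : ∀ τ, f τ = g τ + (1 - φ τ) * PD τ - (1 - γ τ) * PM τ := by
    intro τ
    have hf : f τ = x1 τ ⬝ᵥ (Md τ *ᵥ x2 τ) + PD τ := by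
      rw [hfdef]
      simp only [hFext τ, dotProduct_add, hPD τ]
    rw [hf, hgdef]
    ring
  -- continuity / integrability of f
  have hfc : Continuous f := by
    have e : f = fun τ => x1 τ ⬝ᵥ (Md τ *ᵥ x2 τ) + x1 τ ⬝ᵥ (Dd τ *ᵥ x1 τ) := by
      funext τ
      simp only [hfdef, hFext τ, dotProduct_add]
    rw [e]
    exact (continuous_dot_mulVec x1 x2 Md hx1ci hx2ci hMdc).add
      (continuous_dot_mulVec x1 x1 Dd hx1ci hx1ci hDdc)
  have hfint : IntervalIntegrable f MeasureTheory.volume 0 tstar :=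
    hfc.intervalIntegrable 0 tstar
  have hgint : IntervalIntegrable g MeasureTheory.volume 0 tstar := by
    have e : g = fun τ => f τ - (1 - φ τ) * PD τ + (1 - γ τ) * PM τ := by
      funext τ; rw [hkey τ]; ring
    rw [e]
    exact (hfint.sub (hφPDint tstar)).add (hγPMint tstar)
  -- FTC for G
  have hFTC : (∫ τ in (0 : ℝ)..tstar, g τ) = G tstar - G 0 :=
    intervalIntegral.integral_eq_sub_of_hasDerivAt (fun τ _ => hGd τ) hgint
  -- split the integral
  have hsplit : (∫ τ in (0 : ℝ)..tstar, f τ) =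
      (∫ τ in (0 : ℝ)..tstar, g τ) + (∫ τ in (0 : ℝ)..tstar, (1 - φ τ) * PD τ)
        - (∫ τ in (0 : ℝ)..tstar, (1 - γ τ) * PM τ) := by
    rw [← intervalIntegral.integral_add hgint (hφPDint tstar),
      ← intervalIntegral.integral_sub ((hgint.add (hφPDint tstar))) (hγPMint tstar)]
    apply intervalIntegral.integral_congr
    intro τ _
    exact hkey τ
  -- bounds
  have hPDnn : ∀ τ, 0 ≤ PD τ := by
    intro τ
    rw [hPD τ]
    simpa using (hDdpd τ).posSemidef.dotProduct_mulVec_nonneg (x1 τ)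
  have hφnn : (0 : ℝ) ≤ ∫ τ in (0 : ℝ)..tstar, (1 - φ τ) * PD τ := by
    apply intervalIntegral.integral_nonneg htstar
    intro τ _
    have h1 : (0 : ℝ) ≤ 1 - φ τ := by rcases hφ τ with h | h <;> simp [h]
    exact mul_nonneg h1 (hPDnn τ)
  have hγnp : (∫ τ in (0 : ℝ)..tstar, (1 - γ τ) * PM τ) ≤ 0 := by
    have hnn : (0 : ℝ) ≤ ∫ τ in (0 : ℝ)..tstar, -((1 - γ τ) * PM τ) := by
      apply intervalIntegral.integral_nonneg htstar
      intro τ hτ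
      have h1 : (0 : ℝ) ≤ 1 - γ τ := by rcases hγ τ with h | h <;> simp [h]
      have h2 : PM τ ≤ 0 := by
        have h3 : (0 : ℝ) ≤ x1 τ ⬝ᵥ (-(Md' τ) *ᵥ x1 τ) := by
          simpa using (hneg τ hτ).dotProduct_mulVec_nonneg (x1 τ)
        rw [neg_mulVec, dotProduct_neg] at h3
        rw [hPM τ]
        nlinarith
      nlinarith
    have := intervalIntegral.integral_neg (f := fun τ => (1 - γ τ) * PM τ)
      (a := (0 : ℝ)) (b := tstar) (μ := MeasureTheory.volume)
    rw [this] at hnn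
    linarith
  have hHts : 0 ≤ H tstar := by
    rw [hH tstar]
    have := (hMdpd tstar).posSemidef.dotProduct_mulVec_nonneg (x1 tstar)
    simp only [star_trivial] at this
    nlinarith [(by simpa using (hMdpd tstar).posSemidef.dotProduct_mulVec_nonneg (x1 tstar) : (0:ℝ) ≤ x1 tstar ⬝ᵥ (Md tstar *ᵥ x1 tstar))]
  have hTts : 0 ≤ T tstar := by rw [hT tstar]; positivity
  have : (∫ τ in (0 : ℝ)..tstar, f τ) ≥ -H 0 - T 0 := by
    rw [hsplit, hFTC, hGdef]
    simp only
    linarith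
  exact this
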